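/- Let p be an odd prime and a_1, ..., a_{(p-1)/2} ∈ ℂ. Let C be the ℂ-algebra generated by x_0, ..., x_{p-1} (indices mod p) with relations x_{i+k} x_{-i+k} + x_{-i+k} x_{i+k} = a_i x_k^2 for 1 ≤ i ≤ (p-1)/2 and 0 ≤ k ≤ p-1. Suppose some a_i ≠ 0 and there exists an algebra homomorphism φ: C → ℂ with φ not identically zero on the generators and φ(x_0) = 1. Then, setting y_j = φ(x_j), for all k ≥ 0 one has y_{ki} = a_i^{C(k,2)} y_i^k / 2^{C(k,2)}, where C(k,2) = k(k-1)/2. -/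

import Mathlib

/-- The relations `x_{i+k} x_{-i+k} + x_{-i+k} x_{i+k} = a_i x_k^2`
(`1 ≤ i ≤ (p-1)/2`, `k ∈ ℤ/p`) of the `H_p`-Clifford algebra. -/
inductive HeisCliffRel (p : ℕ) (a : ZMod p → ℂ) :
    FreeAlgebra ℂ (ZMod p) → FreeAlgebra ℂ (ZMod p) → Prop
  | of (i k : ZMod p) (h1 : 1 ≤ i.val) (h2 : i.val ≤ (p - 1) / 2) :
      HeisCliffRel p a
        (FreeAlgebra.ι ℂ (k + i) * FreeAlgebra.ι ℂ (k - i) +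
          FreeAlgebra.ι ℂ (k - i) * FreeAlgebra.ι ℂ (k + i))
        (a i • (FreeAlgebra.ι ℂ k * FreeAlgebra.ι ℂ k))

/-- The `H_p`-Clifford algebra `C` generated by `x_0,…,x_{p-1}` with relations
`{x_{i+k}, x_{-i+k}} = a_i x_k^2`. -/
noncomputable def HeisClifford (p : ℕ) (a : ZMod p → ℂ) : Type :=
  RingQuot (HeisCliffRel p a)

noncomputable instance (p : ℕ) (a : ZMod p → ℂ) : Ring (HeisClifford p a) :=
  inferInstanceAs (Ring (RingQuot (HeisCliffRel p a)))

noncomputable instance (p : ℕ) (a : ZMod p → ℂ) : Algebra ℂ (HeisClifford p a) :=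
  inferInstanceAs (Algebra ℂ (RingQuot (HeisCliffRel p a)))

/-- The generator `x_j` of the `H_p`-Clifford algebra. -/
noncomputable def heisCliffGen (p : ℕ) (a : ZMod p → ℂ) (j : ZMod p) :
    HeisClifford p a :=
  RingQuot.mkAlgHom ℂ (HeisCliffRel p a) (FreeAlgebra.ι ℂ j)

/-- Let `p` be an odd prime and `a_1,…,a_{(p-1)/2} ∈ ℂ`.  Let `C` be the
`ℂ`-algebra generated by `x_0,…,x_{p-1}` (indices mod `p`) with relations
`x_{i+k} x_{-i+k} + x_{-i+k} x_{i+k} = a_i x_k^2`.  Suppose some `a_i ≠ 0` and there is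
an algebra homomorphism `φ : C → ℂ`, not identically zero on the generators, with
`φ(x_0) = 1`.  Then, setting `y_j = φ(x_j)`, for all `k ≥ 0` one has
`y_{ki} = a_i^{C(k,2)} y_i^k / 2^{C(k,2)}`, where `C(k,2) = k(k-1)/2`. -/
theorem heisenberg_clifford_one_dim_rep (p : ℕ) (hp : p.Prime) (hodd : Odd p)
    (a : ZMod p → ℂ) (i : ZMod p) (hi1 : 1 ≤ i.val) (hi2 : i.val ≤ (p - 1) / 2)
    (ha : a i ≠ 0) (φ : HeisClifford p a →ₐ[ℂ] ℂ)
    (hnz : ∃ j : ZMod p, φ (heisCliffGen p a j) ≠ 0)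
    (h0 : φ (heisCliffGen p a 0) = 1) :
    ∀ k : ℕ, φ (heisCliffGen p a ((k : ZMod p) * i)) =
      a i ^ k.choose 2 * φ (heisCliffGen p a i) ^ k / 2 ^ k.choose 2 := by
  have key : ∀ k : ZMod p,
      2 * (φ (heisCliffGen p a (k + i)) * φ (heisCliffGen p a (k - i))) =
      a i * (φ (heisCliffGen p a k) * φ (heisCliffGen p a k)) := by
    intro k
    have h := congrArg φ (RingQuot.mkAlgHom_rel ℂ
      (HeisCliffRel.of (p := p) (a := a) i k hi1 hi2))
    simp only [map_add, map_mul, map_smul, smul_eq_mul, heisCliffGen] at h ⊢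
    erw [map_add, map_mul, map_mul, map_smul, map_mul] at h
    simp only [smul_eq_mul] at h
    linear_combination h
  have hy : φ (heisCliffGen p a i) ≠ 0 := by
    intro h
    have h1 := key 0
    rw [zero_add, zero_sub, h0, h] at h1
    simp at h1
    exact ha h1.symm
  set y := φ (heisCliffGen p a i) with hy_def
  have main : ∀ k : ℕ,
      (φ (heisCliffGen p a ((k : ZMod p) * i)) =
        a i ^ k.choose 2 * y ^ k / 2 ^ k.choose 2) ∧
      (φ (heisCliffGen p a (((k + 1 : ℕ) : ZMod p) * i)) =
        a i ^ (k + 1).choose 2 * y ^ (k + 1) / 2 ^ (k + 1).choose 2) := by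
    intro k
    induction k with
    | zero =>
      constructor
      · simpa using h0
      · simp [hy_def]
    | succ n ih =>
      refine ⟨ih.2, ?_⟩
      have hk := key (((n + 1 : ℕ) : ZMod p) * i)
      have e1 : ((n + 1 : ℕ) : ZMod p) * i + i = ((n + 2 : ℕ) : ZMod p) * i := by
        push_cast; ring
      have e2 : ((n + 1 : ℕ) : ZMod p) * i - i = ((n : ℕ) : ZMod p) * i := by
        push_cast; ring
      rw [e1, e2, ih.1, ih.2] at hk
      have c1 : (n + 1).choose 2 = n.choose 2 + n := by
        rw [Nat.choose_succ_succ]; simp [Nat.add_comm]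
      have c2 : (n + 2).choose 2 = n.choose 2 + (2 * n + 1) := by
        rw [Nat.choose_succ_succ, c1]; simp [Nat.choose_one_right]; ring
      rw [c1] at hk
      rw [c2]
      set A := n.choose 2 with hA
      have h2 : ((2 : ℂ) ^ A) ≠ 0 := pow_ne_zero _ two_ne_zero
      have hcn : (a i ^ A) ≠ 0 := pow_ne_zero _ ha
      have hyn : (y ^ n) ≠ 0 := pow_ne_zero _ hy
      have hd : (2 : ℂ) * (a i ^ A * y ^ n / 2 ^ A) ≠ 0 := by
        apply mul_ne_zero two_ne_zero
        exact div_ne_zero (mul_ne_zero hcn hyn) h2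
      apply mul_left_cancel₀ hd
      calc 2 * (a i ^ A * y ^ n / 2 ^ A) * φ (heisCliffGen p a ((↑(n + 2) : ZMod p) * i))
          = 2 * (φ (heisCliffGen p a ((↑(n + 2) : ZMod p) * i)) *
              (a i ^ A * y ^ n / 2 ^ A)) := by ring
        _ = a i * (a i ^ (A + n) * y ^ (n + 1) / 2 ^ (A + n) *
              (a i ^ (A + n) * y ^ (n + 1) / 2 ^ (A + n))) := hk
        _ = 2 * (a i ^ A * y ^ n / 2 ^ A) *
              (a i ^ (A + (2 * n + 1)) * y ^ (n + 1 + 1) / 2 ^ (A + (2 * n + 1))) := by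
            field_simp
            ring
  intro k
  exact (main k).1
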